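/- Multiplicative sin-theta theorem (Frobenius norm version): Let A ∈ ℂ^{m×n} have thin SVD A = UΣV* with Σ = diag(σ₁ ≥ … ≥ σ_n) and V = [V₁ V₂] with V₂ ∈ ℂ^{n×k}. Let X ∈ ℂ^{m×s} (m ≥ s ≥ n) be such that X*U has full column rank, with thin QR factorization X*U = QR, and let à = X*A have SVD with singular values σ̃₁ ≥ … ≥ σ̃_n and right singular vector matrix [Ṽ₁ Ṽ₂], Ṽ₂ ∈ ℂ^{n×k}. If there exist α, δ > 0 with σ_{n−k} ≥ α + δ and σ̃_{n−k+1} ≤ α, then ‖sin Θ(V₂, Ṽ₂)‖_F ≤ ‖R − R^{−*}‖_F / χ(α², (α+δ)²), where χ(a,b) = |a−b|/√(ab). -/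

import Mathlib

open Matrix BigOperators

/-- Frobenius norm of a complex matrix. -/
noncomputable def frob {p q : Type*} [Fintype p] [Fintype q] (A : Matrix p q ℂ) : ℝ :=
  Real.sqrt (∑ i, ∑ j, ‖A i j‖ ^ 2)

/-- Euclidean (ℓ₂) norm of a complex vector. -/
noncomputable def enorm {q : Type*} [Fintype q] (x : q → ℂ) : ℝ :=
  Real.sqrt (∑ i, ‖x i‖ ^ 2)

/-- Spectral norm (operator 2-norm) of a complex matrix. -/
noncomputable def specNorm {p q : Type*} [Fintype p] [Fintype q] (A : Matrix p q ℂ) : ℝ :=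
  sSup {r : ℝ | ∃ x : q → ℂ, _root_.enorm x ≤ 1 ∧ r = _root_.enorm (A.mulVec x)}

/-- The relative gap function χ(a,b) = |a−b|/√(ab). -/
noncomputable def chi (a b : ℝ) : ℝ := |a - b| / Real.sqrt (a * b)

/-- trace (Aᴴ*A) is the (complex cast of the) sum of squared entry norms. -/
lemma trace_conjTranspose_mul_self {p q : Type*} [Fintype p] [Fintype q]
    (A : Matrix p q ℂ) :
    Matrix.trace (Aᴴ * A) = ((∑ i, ∑ j, ‖A i j‖ ^ 2 : ℝ) : ℂ) := by
  simp only [Matrix.trace, Matrix.diag, Matrix.mul_apply, Matrix.conjTranspose_apply]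
  rw [Finset.sum_comm]
  push_cast
  congr 1; ext i; congr 1; ext j
  exact Complex.conj_mul' (A i j)

/-- Contraction: ∑‖(Utᴴ*Q*D)‖² ≤ ∑‖D‖² when Ut, Q have orthonormal columns. -/
lemma sum_sq_contract {s n : Type*} [Fintype s] [Fintype n] [DecidableEq n]
    (Ut Q : Matrix s n ℂ) (D : Matrix n n ℂ)
    (hUt : Utᴴ * Ut = 1) (hQ : Qᴴ * Q = 1) :
    ∑ i, ∑ j, ‖(Utᴴ * Q * D) i j‖ ^ 2 ≤ ∑ i, ∑ j, ‖D i j‖ ^ 2 := by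
  have hQ' : ∀ M : Matrix n n ℂ, Qᴴ * (Q * M) = M := fun M => by
    rw [← Matrix.mul_assoc, hQ, Matrix.one_mul]
  have hUt' : ∀ M : Matrix n n ℂ, Utᴴ * (Ut * M) = M := fun M => by
    rw [← Matrix.mul_assoc, hUt, Matrix.one_mul]
  set G : Matrix n n ℂ := Utᴴ * Q * D with hG
  set N : Matrix s n ℂ := Q * D - Ut * G with hN
  have key : Gᴴ * G + Nᴴ * N = Dᴴ * D := by
    simp only [hN, hG, Matrix.conjTranspose_sub, Matrix.conjTranspose_mul,
      Matrix.conjTranspose_conjTranspose, Matrix.sub_mul, Matrix.mul_sub,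
      Matrix.mul_assoc, hQ', hUt']
    abel
  have htr := congrArg Matrix.trace key
  rw [Matrix.trace_add, trace_conjTranspose_mul_self, trace_conjTranspose_mul_self,
    trace_conjTranspose_mul_self] at htr
  have hre : (∑ i, ∑ j, ‖G i j‖ ^ 2) + (∑ i, ∑ j, ‖N i j‖ ^ 2)
      = ∑ i, ∑ j, ‖D i j‖ ^ 2 := by
    exact_mod_cast htr
  have hNn : 0 ≤ ∑ i, ∑ j, ‖N i j‖ ^ 2 :=
    Finset.sum_nonneg fun _ _ => Finset.sum_nonneg fun _ _ => sq_nonneg _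
  linarith


/-- Per-entry bound: from (a²-b²)W = a g b and the gap conditions, ‖W‖·χ ≤ ‖g‖. -/
lemma entry_bound (α β a b cc : ℝ) (W g : ℂ)
    (hα : 0 < α) (hαβ : α < β)
    (ha0 : 0 ≤ a) (haα : a ≤ α) (hbβ : β ≤ b)
    (hcc : cc = (β ^ 2 - α ^ 2) / (α * β))
    (h1 : ((a * a - b * b : ℝ) : ℂ) * W = (a : ℂ) * (g * (b : ℂ))) :
    ‖W‖ * cc ≤ ‖g‖ := by
  have hβ0 : 0 < β := lt_trans hα hαβ
  have hb0 : 0 < b := lt_of_lt_of_le hβ0 hbβ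
  have hba : a * a < b * b :=
    calc a * a ≤ α * α := mul_self_le_mul_self ha0 haα
      _ < β * β := mul_self_lt_mul_self hα.le hαβ
      _ ≤ b * b := mul_self_le_mul_self hβ0.le hbβ
  have h2 := congrArg norm h1
  rw [norm_mul, norm_mul, norm_mul, Complex.norm_real, Complex.norm_real,
    Complex.norm_real, Real.norm_eq_abs, Real.norm_eq_abs, Real.norm_eq_abs,
    abs_of_nonpos (by linarith : a * a - b * b ≤ 0), abs_of_nonneg ha0,
    abs_of_nonneg hb0.le] at h2
  have hgn : (0:ℝ) ≤ ‖g‖ := norm_nonneg _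
  have haβb : a * β ≤ α * b := mul_le_mul haα hbβ hβ0.le hα.le
  have hkey : a * b * cc ≤ b * b - a * a := by
    rw [hcc, ← mul_div_assoc, div_le_iff₀ (by positivity : (0:ℝ) < α * β)]
    nlinarith [mul_nonneg (sub_nonneg.2 haβb)
      (by positivity : (0:ℝ) ≤ b * β + a * α)]
  have hccpos : 0 < cc := by
    rw [hcc]; apply div_pos (by nlinarith) (by positivity)
  have h3 : (b * b - a * a) * (‖W‖ * cc) = (a * b * cc) * ‖g‖ := by
    rw [show a * b * cc * ‖g‖ = (a * (‖g‖ * b)) * cc by ring, ← h2]; ring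
  have h5' : (a * b * cc) * ‖g‖ ≤ (b * b - a * a) * ‖g‖ :=
    mul_le_mul_of_nonneg_right hkey hgn
  have h6' : (b * b - a * a) * (‖W‖ * cc) ≤ (b * b - a * a) * ‖g‖ := by
    rw [h3]; exact h5'
  exact le_of_mul_le_mul_left h6' (by linarith)

/-- Multiplicative sin-theta theorem (Frobenius norm, Theorem 3.4):
with thin SVDs A = U Σ [V₁ V₂]* and X*A = Ũ Σ̃ [Ṽ₁ Ṽ₂]*, thin QR X*U = QR, and gap
condition σ_i ≥ α+δ for i ≤ n−k, σ̃_{n−k+j} ≤ α, one has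
‖sin Θ(V₂, Ṽ₂)‖_F = ‖Ṽ₂*V₁‖_F ≤ ‖R − R^{−*}‖_F / χ(α², (α+δ)²). -/
theorem stmt10 {m s nk k : ℕ}
    (A U : Matrix (Fin m) (Fin nk ⊕ Fin k) ℂ)
    (σ : Fin nk ⊕ Fin k → ℝ)
    (V₁ : Matrix (Fin nk ⊕ Fin k) (Fin nk) ℂ) (V₂ : Matrix (Fin nk ⊕ Fin k) (Fin k) ℂ)
    (hU : Uᴴ * U = 1)
    (hV : Matrix.fromCols V₁ V₂ * (Matrix.fromCols V₁ V₂)ᴴ = 1)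
    (hσ0 : ∀ i, 0 ≤ σ i)
    (hA : A = U * Matrix.diagonal (fun i => (σ i : ℂ)) * (Matrix.fromCols V₁ V₂)ᴴ)
    (X : Matrix (Fin m) (Fin s) ℂ)
    (Q : Matrix (Fin s) (Fin nk ⊕ Fin k) ℂ)
    (R : Matrix (Fin nk ⊕ Fin k) (Fin nk ⊕ Fin k) ℂ)
    (hQ : Qᴴ * Q = 1) (hR : IsUnit R.det) (hQR : Xᴴ * U = Q * R)
    (Ut : Matrix (Fin s) (Fin nk ⊕ Fin k) ℂ) (σt : Fin nk ⊕ Fin k → ℝ)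
    (Vt₁ : Matrix (Fin nk ⊕ Fin k) (Fin nk) ℂ) (Vt₂ : Matrix (Fin nk ⊕ Fin k) (Fin k) ℂ)
    (hUt : Utᴴ * Ut = 1)
    (hVt : Matrix.fromCols Vt₁ Vt₂ * (Matrix.fromCols Vt₁ Vt₂)ᴴ = 1)
    (hσt0 : ∀ i, 0 ≤ σt i)
    (hAt : Xᴴ * A
        = Ut * Matrix.diagonal (fun i => (σt i : ℂ)) * (Matrix.fromCols Vt₁ Vt₂)ᴴ)
    (α δ : ℝ) (hα : 0 < α) (hδ : 0 < δ)
    (hgap1 : ∀ i, α + δ ≤ σ (Sum.inl i)) (hgap2 : ∀ j, σt (Sum.inr j) ≤ α) :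
    frob (Vt₂ᴴ * V₁) ≤ frob (R - (R⁻¹)ᴴ) / chi (α ^ 2) ((α + δ) ^ 2) := by
  have hβpos : 0 < α + δ := by linarith
  have hαβ : α < α + δ := by linarith
  set β := α + δ with hβ
  -- value and positivity of chi
  have hchi : chi (α ^ 2) (β ^ 2) = (β ^ 2 - α ^ 2) / (α * β) := by
    rw [chi, abs_of_nonpos (by nlinarith), ← mul_pow, Real.sqrt_sq (by positivity)]
    ring
  have hc : 0 < chi (α ^ 2) (β ^ 2) := by
    rw [hchi]; apply div_pos (by nlinarith) (by positivity)
  set c := chi (α ^ 2) (β ^ 2) with hcdef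
  -- notation
  set V : Matrix (Fin nk ⊕ Fin k) (Fin nk ⊕ Fin k) ℂ := Matrix.fromCols V₁ V₂ with hVdef
  set Vt : Matrix (Fin nk ⊕ Fin k) (Fin nk ⊕ Fin k) ℂ := Matrix.fromCols Vt₁ Vt₂ with hVtdef
  set Sg : Matrix (Fin nk ⊕ Fin k) (Fin nk ⊕ Fin k) ℂ := Matrix.diagonal (fun i => (σ i : ℂ)) with hSg
  set Sgt : Matrix (Fin nk ⊕ Fin k) (Fin nk ⊕ Fin k) ℂ := Matrix.diagonal (fun i => (σt i : ℂ)) with hSgt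
  set D : Matrix (Fin nk ⊕ Fin k) (Fin nk ⊕ Fin k) ℂ := R - (R⁻¹)ᴴ with hD
  have hVo : Vᴴ * V = 1 := mul_eq_one_comm.mp hV
  have hVto : Vtᴴ * Vt = 1 := mul_eq_one_comm.mp hVt
  have hU' : ∀ M : Matrix (Fin nk ⊕ Fin k) (Fin nk ⊕ Fin k) ℂ, Uᴴ * (U * M) = M := fun M => by
    rw [← Matrix.mul_assoc, hU, Matrix.one_mul]
  have hQ' : ∀ M : Matrix (Fin nk ⊕ Fin k) (Fin nk ⊕ Fin k) ℂ, Qᴴ * (Q * M) = M := fun M => by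
    rw [← Matrix.mul_assoc, hQ, Matrix.one_mul]
  have hUt' : ∀ M : Matrix (Fin nk ⊕ Fin k) (Fin nk ⊕ Fin k) ℂ, Utᴴ * (Ut * M) = M := fun M => by
    rw [← Matrix.mul_assoc, hUt, Matrix.one_mul]
  have hVt' : ∀ M : Matrix (Fin nk ⊕ Fin k) (Fin nk ⊕ Fin k) ℂ, Vtᴴ * (Vt * M) = M := fun M => by
    rw [← Matrix.mul_assoc, hVto, Matrix.one_mul]
  have hSgH : Sgᴴ = Sg := by
    rw [hSg, Matrix.diagonal_conjTranspose]
    have h : (star fun i => ((σ i : ℂ))) = fun i => ((σ i : ℂ)) :=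
      funext fun i => by simp
    rw [h]
  have hSgtH : Sgtᴴ = Sgt := by
    rw [hSgt, Matrix.diagonal_conjTranspose]
    have h : (star fun i => ((σt i : ℂ))) = fun i => ((σt i : ℂ)) :=
      funext fun i => by simp
    rw [h]
  -- Ã = Q * R * Sg * Vᴴ
  have hAt2 : Xᴴ * A = Q * R * Sg * Vᴴ := by
    rw [hA, ← Matrix.mul_assoc, ← Matrix.mul_assoc, hQR]
  -- Qᴴ * Ã = R * Sg * Vᴴ  (right-assoc form)
  have hQAt : Qᴴ * (Xᴴ * A) = R * (Sg * Vᴴ) := by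
    rw [hAt2]
    simp only [Matrix.mul_assoc, hQ']
  -- h5 : R * (Sg * (Vᴴ * Vt)) = Qᴴ * (Ut * Sgt)
  have h5 : R * (Sg * (Vᴴ * Vt)) = Qᴴ * (Ut * Sgt) := by
    have e1 : Qᴴ * (Xᴴ * A) * Vt = R * (Sg * (Vᴴ * Vt)) := by
      rw [hQAt]; simp only [Matrix.mul_assoc]
    have e2 : Qᴴ * (Xᴴ * A) * Vt = Qᴴ * (Ut * Sgt) := by
      rw [hAt]
      simp only [Matrix.mul_assoc, hVto, Matrix.mul_one]
    rw [← e1, e2]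
  -- h6 : Vtᴴ * (V * (Sg * Rᴴ)) = Sgt * (Utᴴ * Q)
  have h6 : Vtᴴ * (V * (Sg * Rᴴ)) = Sgt * (Utᴴ * Q) := by
    have := congrArg Matrix.conjTranspose h5
    simp only [Matrix.conjTranspose_mul, Matrix.conjTranspose_conjTranspose,
      hSgH, hSgtH, Matrix.mul_assoc] at this
    exact this
  -- hRD : Rᴴ * (D * M) = Rᴴ * (R * M) - M
  have hRDm : ∀ M : Matrix (Fin nk ⊕ Fin k) (Fin nk ⊕ Fin k) ℂ,
      Rᴴ * (D * M) = Rᴴ * (R * M) - M := fun M => by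
    rw [hD, Matrix.sub_mul, Matrix.mul_sub, ← Matrix.mul_assoc Rᴴ ((R⁻¹)ᴴ) M,
      ← Matrix.conjTranspose_mul, Matrix.nonsing_inv_mul R hR, Matrix.conjTranspose_one,
      Matrix.one_mul]
  -- Gram matrices
  have hAA : Aᴴ * A = V * (Sg * (Sg * Vᴴ)) := by
    rw [hA]
    simp only [Matrix.conjTranspose_mul, Matrix.conjTranspose_conjTranspose, hSgH,
      Matrix.mul_assoc, hU']
  have hGt1 : (Xᴴ * A)ᴴ * (Xᴴ * A) = Vt * (Sgt * (Sgt * Vtᴴ)) := by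
    rw [hAt]
    simp only [Matrix.conjTranspose_mul, Matrix.conjTranspose_conjTranspose, hSgtH,
      Matrix.mul_assoc, hUt']
  have hGt2 : (Xᴴ * A)ᴴ * (Xᴴ * A) = V * (Sg * (Rᴴ * (R * (Sg * Vᴴ)))) := by
    rw [hAt2]
    simp only [Matrix.conjTranspose_mul, Matrix.conjTranspose_conjTranspose, hSgH,
      Matrix.mul_assoc, hQ']
  set P : Matrix (Fin nk ⊕ Fin k) (Fin nk ⊕ Fin k) ℂ := Vtᴴ * V with hP
  -- eq1 : Sgt * (Sgt * P) = Vtᴴ * (V * (Sg * (Rᴴ * (R * Sg))))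
  have eq1 : Sgt * (Sgt * P) = Vtᴴ * (V * (Sg * (Rᴴ * (R * Sg)))) := by
    have e1 : Vtᴴ * ((Xᴴ * A)ᴴ * (Xᴴ * A) * V) = Sgt * (Sgt * P) := by
      rw [hGt1, hP]
      simp only [Matrix.mul_assoc, hVt']
    have e2 : Vtᴴ * ((Xᴴ * A)ᴴ * (Xᴴ * A) * V) = Vtᴴ * (V * (Sg * (Rᴴ * (R * Sg)))) := by
      rw [hGt2]
      simp only [Matrix.mul_assoc, hVo, Matrix.mul_one]
    rw [← e1, e2]
  -- eq2 : P * (Sg * Sg) = Vtᴴ * (V * (Sg * Sg))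
  have eq2 : P * (Sg * Sg) = Vtᴴ * (V * (Sg * Sg)) := by
    rw [hP]; simp only [Matrix.mul_assoc]
  -- key identity
  have hstar : Sgt * (Sgt * P) - P * (Sg * Sg) = Sgt * (Utᴴ * Q * D * Sg) := by
    rw [eq1, eq2]
    have : Rᴴ * (R * Sg) - Sg = Rᴴ * (D * Sg) := by rw [hRDm Sg]
    calc Vtᴴ * (V * (Sg * (Rᴴ * (R * Sg)))) - Vtᴴ * (V * (Sg * Sg))
        = Vtᴴ * (V * (Sg * (Rᴴ * (R * Sg) - Sg))) := by
          rw [Matrix.mul_sub Sg, Matrix.mul_sub V, Matrix.mul_sub Vtᴴ]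
      _ = Vtᴴ * (V * (Sg * (Rᴴ * (D * Sg)))) := by rw [this]
      _ = Vtᴴ * (V * (Sg * Rᴴ)) * (D * Sg) := by simp only [Matrix.mul_assoc]
      _ = Sgt * (Utᴴ * Q * D * Sg) := by rw [h6]; simp only [Matrix.mul_assoc]
  -- entrywise
  set K : Matrix (Fin nk ⊕ Fin k) (Fin nk ⊕ Fin k) ℂ := Utᴴ * Q * D with hK
  set W : Matrix (Fin k) (Fin nk) ℂ := Vt₂ᴴ * V₁ with hW
  have hstar2 : Sgt * (Sgt * P) - P * (Sg * Sg) = Sgt * (K * Sg) := by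
    rw [hstar, hK, Matrix.mul_assoc]
  have hPentry : ∀ (j : Fin k) (i : Fin nk), P (Sum.inr j) (Sum.inl i) = W j i := by
    intro j i
    rw [hP, hW, hVtdef, hVdef]
    simp [Matrix.mul_apply, Matrix.conjTranspose_apply, Matrix.fromCols]
  have hentry : ∀ (j : Fin k) (i : Fin nk),
      ‖W j i‖ * c ≤ ‖K (Sum.inr j) (Sum.inl i)‖ := by
    intro j i
    set a := σt (Sum.inr j) with ha
    set b := σ (Sum.inl i) with hb
    set g := K (Sum.inr j) (Sum.inl i) with hg
    have ha0 : 0 ≤ a := hσt0 _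
    have haα : a ≤ α := hgap2 j
    have hbβ : β ≤ b := hgap1 i
    have h0 : (Sgt * (Sgt * P)) (Sum.inr j) (Sum.inl i)
        - (P * (Sg * Sg)) (Sum.inr j) (Sum.inl i)
        = (Sgt * (K * Sg)) (Sum.inr j) (Sum.inl i) := by
      rw [← Matrix.sub_apply, hstar2]
    simp only [hSgt, hSg, Matrix.diagonal_mul, Matrix.mul_diagonal,
      Matrix.diagonal_mul_diagonal] at h0
    rw [hPentry j i] at h0
    have h1 : ((a * a - b * b : ℝ) : ℂ) * W j i = (a : ℂ) * (g * (b : ℂ)) := by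
      push_cast
      linear_combination h0
    exact entry_bound α β a b c (W j i) g hα hαβ ha0 haα hbβ hchi h1
  -- sum up
  have hsum1 : (∑ j, ∑ i, ‖W j i‖ ^ 2) * c ^ 2
      ≤ ∑ j, ∑ i, ‖K (Sum.inr j) (Sum.inl i)‖ ^ 2 := by
    rw [Finset.sum_mul]
    apply Finset.sum_le_sum
    intro j _
    rw [Finset.sum_mul]
    apply Finset.sum_le_sum
    intro i _
    have := hentry j i
    calc ‖W j i‖ ^ 2 * c ^ 2 = (‖W j i‖ * c) ^ 2 := by ring
      _ ≤ ‖K (Sum.inr j) (Sum.inl i)‖ ^ 2 := by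
          apply pow_le_pow_left₀ (by positivity) this
  have hsum2 : (∑ j, ∑ i, ‖K (Sum.inr j) (Sum.inl i)‖ ^ 2)
      ≤ ∑ p, ∑ q, ‖K p q‖ ^ 2 := by
    rw [Fintype.sum_sum_type]
    have step : ∀ j : Fin k, (∑ i, ‖K (Sum.inr j) (Sum.inl i)‖ ^ 2)
        ≤ ∑ q, ‖K (Sum.inr j) q‖ ^ 2 := by
      intro j
      rw [Fintype.sum_sum_type]
      exact le_add_of_nonneg_right (Finset.sum_nonneg fun _ _ => sq_nonneg _)
    calc (∑ j, ∑ i, ‖K (Sum.inr j) (Sum.inl i)‖ ^ 2)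
        ≤ ∑ j, ∑ q, ‖K (Sum.inr j) q‖ ^ 2 := Finset.sum_le_sum fun j _ => step j
      _ ≤ _ := le_add_of_nonneg_left (Finset.sum_nonneg fun _ _ =>
            Finset.sum_nonneg fun _ _ => sq_nonneg _)
  have hsum3 : (∑ p, ∑ q, ‖K p q‖ ^ 2) ≤ ∑ p, ∑ q, ‖D p q‖ ^ 2 := by
    rw [hK, hD]
    exact sum_sq_contract Ut Q (R - (R⁻¹)ᴴ) hUt hQ
  have htotal : (∑ j, ∑ i, ‖W j i‖ ^ 2) * c ^ 2 ≤ ∑ p, ∑ q, ‖D p q‖ ^ 2 :=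
    le_trans hsum1 (le_trans hsum2 hsum3)
  -- finish
  rw [frob, frob, le_div_iff₀ hc]
  have hWn : (0:ℝ) ≤ ∑ j, ∑ i, ‖W j i‖ ^ 2 :=
    Finset.sum_nonneg fun _ _ => Finset.sum_nonneg fun _ _ => sq_nonneg _
  calc Real.sqrt (∑ j, ∑ i, ‖W j i‖ ^ 2) * c
      = Real.sqrt ((∑ j, ∑ i, ‖W j i‖ ^ 2) * c ^ 2) := by
        rw [Real.sqrt_mul hWn, Real.sqrt_sq hc.le]
    _ ≤ Real.sqrt (∑ p, ∑ q, ‖D p q‖ ^ 2) := Real.sqrt_le_sqrt htotal
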